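/- For a timed automorphism π and reals x, y, and any integer z and comparison relation ∼ ∈ {<, ≤, =, ≥, >}: x - y ∼ z holds if and only if π(x) - π(y) ∼ z holds. -/

import Mathlib

/-- A timed automorphism: a monotone bijection `π : ℝ → ℝ` with `π (x+1) = π x + 1`. -/
def IsTimedAutomorphism (π : ℝ → ℝ) : Prop :=
  Function.Bijective π ∧ StrictMono π ∧ ∀ x : ℝ, π (x + 1) = π x + 1

/-- An `S`-timed automorphism: a timed automorphism fixing every point of `S`. -/
def IsSTimedAutomorphism (S : Set ℝ) (π : ℝ → ℝ) : Prop :=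
  IsTimedAutomorphism π ∧ ∀ t ∈ S, π t = t

/-- A timed word: a finite sequence of letters with nonnegative, nondecreasing timestamps. -/
def IsTimedWord {A : Type*} (w : List (A × ℝ)) : Prop :=
  (∀ p ∈ w, 0 ≤ p.2) ∧ (w.map Prod.snd).Chain' (· ≤ ·)

/-- Pointwise action of a real function on the timestamps of a timed word. -/
def mapTW {A : Type*} (π : ℝ → ℝ) (w : List (A × ℝ)) : List (A × ℝ) :=
  w.map fun p => (p.1, π p.2)

/-- Timed automorphisms preserve comparisons of differences with integer constants,
for every comparison relation `∼ ∈ {<, ≤, =, ≥, >}`. -/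
lemma ta_int_shift (π : ℝ → ℝ) (hπ : IsTimedAutomorphism π) (x : ℝ) (z : ℤ) :
    π (x + z) = π x + z := by
  obtain ⟨-, -, h1⟩ := hπ
  induction z using Int.induction_on with
  | zero => simp
  | succ n ih => push_cast; rw [← add_assoc, h1]; push_cast at ih; rw [ih]; ring
  | pred n ih =>
      push_cast
      push_cast at ih
      have h3 : π (x + (-(n:ℝ) - 1) + 1) = π (x + (-(n:ℝ) - 1)) + 1 := h1 _
      have h2 : x + (-(n:ℝ) - 1) + 1 = x + -(n:ℝ) := by ring
      rw [h2, ih] at h3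
      linarith

lemma ta_lt (π : ℝ → ℝ) (hπ : IsTimedAutomorphism π) (a b : ℝ) (c : ℤ) :
    a - b < c ↔ π a - π b < c := by
  have hm : StrictMono π := hπ.2.1
  constructor
  · intro h
    have : π a < π (b + c) := hm (by linarith)
    rw [ta_int_shift π hπ b c] at this; linarith
  · intro h
    have : π a < π (b + c) := by rw [ta_int_shift π hπ b c]; linarith
    have := hm.lt_iff_lt.mp this
    linarith

lemma ta_eq (π : ℝ → ℝ) (hπ : IsTimedAutomorphism π) (a b : ℝ) (c : ℤ) :
    a - b = c ↔ π a - π b = c := by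
  have hm : StrictMono π := hπ.2.1
  constructor
  · intro h
    have : π a = π (b + c) := by rw [show a = b + (c:ℝ) by linarith]
    rw [ta_int_shift π hπ b c] at this; linarith
  · intro h
    have : π a = π (b + c) := by rw [ta_int_shift π hπ b c]; linarith
    have := hm.injective this; linarith

lemma ta_le (π : ℝ → ℝ) (hπ : IsTimedAutomorphism π) (a b : ℝ) (c : ℤ) :
    a - b ≤ c ↔ π a - π b ≤ c := by
  constructor
  · intro h
    rcases lt_or_eq_of_le h with h' | h'
    · exact le_of_lt ((ta_lt π hπ a b c).mp h')
    · exact le_of_eq ((ta_eq π hπ a b c).mp h')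
  · intro h
    rcases lt_or_eq_of_le h with h' | h'
    · exact le_of_lt ((ta_lt π hπ a b c).mpr h')
    · exact le_of_eq ((ta_eq π hπ a b c).mpr h')

theorem timed_automorphism_preserves_clock_comparisons
    (π : ℝ → ℝ) (hπ : IsTimedAutomorphism π) (x y : ℝ) (z : ℤ)
    (r : ℝ → ℝ → Prop)
    (hr : r ∈ ({(· < ·), (· ≤ ·), (· = ·), (· ≥ ·), (· > ·)} : Set (ℝ → ℝ → Prop))) :
    r (x - y) (z : ℝ) ↔ r (π x - π y) (z : ℝ) := by
  simp only [Set.mem_insert_iff, Set.mem_singleton_iff] at hr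
  rcases hr with rfl | rfl | rfl | rfl | rfl
  · exact ta_lt π hπ x y z
  · exact ta_le π hπ x y z
  · exact ta_eq π hπ x y z
  · have := ta_le π hπ y x (-z)
    push_cast at this
    simp only [ge_iff_le]
    constructor <;> intro h
    · have := this.mp (by linarith); linarith
    · have := this.mpr (by linarith); linarith
  · have := ta_lt π hπ y x (-z)
    push_cast at this
    simp only [gt_iff_lt]
    constructor <;> intro h
    · have := this.mp (by linarith); linarith
    · have := this.mpr (by linarith); linarith
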